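/- Let d_S, d_F ≥ 1, let τ be a density matrix on ℂ^{d_F}, and define the linear map E on matrices over ℂ^{d_S} ⊗ ℂ^{d_F} by E(X) = Tr_F(X) ⊗ τ, where Tr_F is the partial trace over the second factor. Then E is self-adjoint with respect to the Hilbert–Schmidt inner product ⟨A,B⟩ = Tr(A*B) — equivalently, E coincides with the Hilbert–Schmidt-orthogonal projection onto the subspace {A ⊗ τ : A ∈ M_{d_S}} — if and only if τ = I/d_F is the maximally mixed state. -/

import Mathlib

open Matrix
open scoped ComplexOrder Kronecker

/-- The partial trace over the second tensor factor. -/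
noncomputable def ptraceF {dS dF : ℕ}
    (X : Matrix (Fin dS × Fin dF) (Fin dS × Fin dF) ℂ) : Matrix (Fin dS) (Fin dS) ℂ :=
  Matrix.of fun s s' => ∑ f, X (s, f) (s', f)

lemma trace_conjT_mul {n : Type*} [Fintype n] (M N : Matrix n n ℂ) :
    (Mᴴ * N).trace = ∑ i, ∑ j, (starRingEnd ℂ) (M j i) * N j i := by
  simp [Matrix.trace, Matrix.mul_apply, Matrix.conjTranspose_apply, Matrix.diag]

lemma sum_swap24 {β γ : Type*} [Fintype β] [Fintype γ] (F : β → γ → β → ℂ) :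
    ∑ f, ∑ s', ∑ g, F f s' g = ∑ f, ∑ s', ∑ g, F g s' f :=
  calc ∑ f, ∑ s', ∑ g, F f s' g
      = ∑ s', ∑ f, ∑ g, F f s' g := Finset.sum_comm
    _ = ∑ s', ∑ g, ∑ f, F f s' g := Finset.sum_congr rfl fun _ _ => Finset.sum_comm
    _ = ∑ g, ∑ s', ∑ f, F f s' g := Finset.sum_comm

/-- The map `E(X) = Tr_F(X) ⊗ τ` is self-adjoint with respect to the Hilbert–Schmidt
inner product `⟨A,B⟩ = Tr(AᴴB)` — equivalently, it is the HS-orthogonal projection onto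
`{A ⊗ τ}` — if and only if `τ` is the maximally mixed state `I / d_F`. -/
theorem ptrace_tensor_selfadjoint_iff_maximally_mixed {dS dF : ℕ}
    (hdS : 1 ≤ dS) (hdF : 1 ≤ dF)
    (τ : Matrix (Fin dF) (Fin dF) ℂ) (hτ : τ.PosSemidef) (hτtr : τ.trace = 1) :
    (∀ A B : Matrix (Fin dS × Fin dF) (Fin dS × Fin dF) ℂ,
      ((ptraceF A ⊗ₖ τ)ᴴ * B).trace = (Aᴴ * (ptraceF B ⊗ₖ τ)).trace) ↔
    τ = ((dF : ℂ))⁻¹ • (1 : Matrix (Fin dF) (Fin dF) ℂ) := by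
  have hdF' : (dF : ℂ) ≠ 0 := Nat.cast_ne_zero.mpr (by omega)
  obtain ⟨s0⟩ : Nonempty (Fin dS) := ⟨⟨0, by omega⟩⟩
  obtain ⟨f0⟩ : Nonempty (Fin dF) := ⟨⟨0, by omega⟩⟩
  constructor
  · intro h
    have key : ∀ f g : Fin dF, (starRingEnd ℂ) (τ f g) = if g = f then τ f0 f0 else 0 := by
      intro f g
      have h1 := h (Matrix.single (s0,f0) (s0,f0) 1) (Matrix.single (s0,f) (s0,g) 1)
      rw [trace_conjT_mul, trace_conjT_mul] at h1
      simp only [ptraceF, Matrix.single, Matrix.kroneckerMap_apply,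
        Fintype.sum_prod_type, Matrix.of_apply, Prod.ext_iff, ite_and, Finset.sum_ite_eq,
        Finset.sum_ite_eq', Finset.mem_univ, if_true, apply_ite, mul_ite, mul_zero, mul_one,
        ite_mul, zero_mul, one_mul, map_zero, _root_.map_one, map_sum] at h1
      convert h1 using 2 <;> simp_all
    have hdiag : ∀ f : Fin dF, τ f f = τ f0 f0 := by
      intro f
      have h1 := key f f
      have h2 := key f0 f0
      simp only [if_pos rfl, if_true] at h1 h2
      calc τ f f = (starRingEnd ℂ) ((starRingEnd ℂ) (τ f f)) := (Complex.conj_conj _).symm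
        _ = (starRingEnd ℂ) (τ f0 f0) := by rw [h1]
        _ = τ f0 f0 := h2
    have hc : (dF : ℂ) * τ f0 f0 = 1 := by
      rw [← hτtr]
      simp only [Matrix.trace, Matrix.diag]
      rw [Finset.sum_congr rfl fun f _ => hdiag f]
      simp [Finset.sum_const, mul_comm]
    ext f g
    by_cases hfg : f = g
    · subst hfg
      simp only [Matrix.smul_apply, Matrix.one_apply_eq, smul_eq_mul, mul_one]
      rw [hdiag]
      exact eq_inv_of_mul_eq_one_left (mul_comm (τ f0 f0) _ ▸ hc)
    · have h1 := key f g
      rw [if_neg (fun hh => hfg hh.symm)] at h1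
      simp only [Matrix.smul_apply, Matrix.one_apply_ne hfg, smul_eq_mul, mul_zero]
      simpa using congrArg (starRingEnd ℂ) h1
  · intro hτ' A B
    subst hτ'
    rw [trace_conjT_mul, trace_conjT_mul]
    simp only [ptraceF, Matrix.kroneckerMap_apply, Matrix.smul_apply, Matrix.one_apply,
      Fintype.sum_prod_type, Matrix.of_apply, smul_eq_mul, mul_ite, mul_zero, mul_one,
      ite_mul, zero_mul, Finset.sum_ite_eq, Finset.sum_ite_eq', Finset.mem_univ, if_true,
      map_sum, _root_.map_mul, apply_ite, map_zero, map_inv₀, Complex.conj_natCast,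
      Finset.sum_mul, Finset.mul_sum]
    refine Finset.sum_congr rfl fun x _ => ?_
    refine Eq.trans (sum_swap24 (fun f s' g =>
      (starRingEnd ℂ) (A (s', g) (x, g)) * (dF:ℂ)⁻¹ * B (s', f) (x, f))) ?_
    exact Finset.sum_congr rfl fun _ _ => Finset.sum_congr rfl fun _ _ =>
      Finset.sum_congr rfl fun _ _ => by ring
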